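/- Let d, k ≥ 2. For C = (x_1,…,x_k) and C′ = (x′_1,…,x′_k) in F(ℝ,k) ⊂ F(ℝ^d,k), define Γ^{C,C′}(t) = (Γ^{C,C′}_1(t),…,Γ^{C,C′}_k(t)) by Γ^{C,C′}_i(t) = x_i + 3·t·i·e_2 for 0 ≤ t ≤ 1/3, Γ^{C,C′}_i(t) = x_i + i·e_2 + (3t−1)(x′_i − x_i) for 1/3 ≤ t ≤ 2/3, and Γ^{C,C′}_i(t) = x′_i + i(3−3t)·e_2 for 2/3 ≤ t ≤ 1. Then Γ^{C,C′}(t) ∈ F(ℝ^d,k) for every t ∈ [0,1], Γ^{C,C′}(0) = C and Γ^{C,C′}(1) = C′, and the resulting map Γ : F(ℝ,k) × F(ℝ,k) → P(F(ℝ^d,k)) is a continuous section of e_2 over F(ℝ,k) × F(ℝ,k) with values in paths in F(ℝ^d,k). -/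

import Mathlib

open unitInterval

noncomputable section

/-- Euclidean space ℝ^d. -/
abbrev E (d : ℕ) : Type := EuclideanSpace ℝ (Fin d)

/-- The ordered configuration space F(ℝ^d, k) of k distinct points in ℝ^d,
viewed as the subspace of (ℝ^d)^k of injective tuples. -/
def Conf (d k : ℕ) : Set (Fin k → E d) := {x | Function.Injective x}

/-- The time i/(n-1) ∈ [0,1] at which the i-th configuration is visited. -/
def eTime (n : ℕ) (i : Fin n) : unitInterval :=
  Set.projIcc 0 1 zero_le_one ((i : ℝ) / ((n : ℝ) - 1))

/-- The evaluation map e_n : P(X) → X^n,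
e_n(γ) = (γ(0), γ(1/(n-1)), …, γ((n-2)/(n-1)), γ(1)). -/
def evalMap {X : Type*} [TopologicalSpace X] (n : ℕ) (γ : C(unitInterval, X)) : Fin n → X :=
  fun i => γ (eTime n i)

/-- `A ⊆ X^n` admits a continuous section of the evaluation map e_n. -/
def HasSec {X : Type*} [TopologicalSpace X] (n : ℕ) (A : Set (Fin n → X)) : Prop :=
  ∃ s : A → C(unitInterval, X), Continuous s ∧ ∀ a : A, evalMap n (s a) = (a : Fin n → X)

/-- The second standard basis vector e_2 of ℝ^d (d ≥ 2). -/
def e2v (d : ℕ) (hd : 2 ≤ d) : E d := EuclideanSpace.single ⟨1, by omega⟩ (1 : ℝ)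

/-- A tuple lies on the axis ℝ ⊂ ℝ^d, embedded via x ↦ (x,0,…,0). -/
def OnAxis {d k : ℕ} (x : Fin k → E d) : Prop :=
  ∀ i : Fin k, ∀ j : Fin d, (j : ℕ) ≠ 0 → x i j = 0

/-- The i-th component of the path Γ^{C,C'} (the index i of the paper, ranging
over 1,…,k, corresponds to (i:ℕ)+1 for i : Fin k):
x_i + 3ti·e_2 on [0,1/3]; x_i + i·e_2 + (3t-1)(x'_i - x_i) on [1/3,2/3];
x'_i + i(3-3t)·e_2 on [2/3,1]. -/
def gammaSeg {d k : ℕ} (hd : 2 ≤ d) (C C' : Fin k → E d) (i : Fin k) (t : ℝ) : E d :=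
  if t ≤ 1 / 3 then C i + (3 * t * ((i : ℝ) + 1)) • e2v d hd
  else if t ≤ 2 / 3 then C i + ((i : ℝ) + 1) • e2v d hd + (3 * t - 1) • (C' i - C i)
  else C' i + (((i : ℝ) + 1) * (3 - 3 * t)) • e2v d hd

lemma e2v_j1 {d : ℕ} (hd : 2 ≤ d) : e2v d hd ⟨1, by omega⟩ = 1 := by
  simp [e2v, EuclideanSpace.single_apply]

lemma gamma_comp1 {d k : ℕ} (hd : 2 ≤ d) {C C' : Fin k → E d}
    (hC : OnAxis C) (hC' : OnAxis C') (i : Fin k) (t : ℝ) :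
    gammaSeg hd C C' i t ⟨1, by omega⟩ =
      if t ≤ 1/3 then 3*t*((i:ℝ)+1) else if t ≤ 2/3 then (i:ℝ)+1
      else ((i:ℝ)+1)*(3-3*t) := by
  have h0 : C i ⟨1, by omega⟩ = 0 := hC i _ (by simp)
  have h0' : C' i ⟨1, by omega⟩ = 0 := hC' i _ (by simp)
  unfold gammaSeg
  split_ifs <;>
    simp [PiLp.add_apply, PiLp.smul_apply, PiLp.sub_apply, h0, h0', e2v_j1 hd,
      smul_eq_mul]

lemma gamma_zero {d k : ℕ} (hd : 2 ≤ d) (C C' : Fin k → E d) (i : Fin k) :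
    gammaSeg hd C C' i 0 = C i := by
  unfold gammaSeg; norm_num

lemma gamma_one {d k : ℕ} (hd : 2 ≤ d) (C C' : Fin k → E d) (i : Fin k) :
    gammaSeg hd C C' i 1 = C' i := by
  unfold gammaSeg; norm_num

lemma fin_eq_of_cast {k : ℕ} {i i' : Fin k} (h : ((i:ℕ):ℝ) + 1 = ((i':ℕ):ℝ) + 1) : i = i' := by
  have : ((i:ℕ):ℝ) = ((i':ℕ):ℝ) := by linarith
  exact Fin.ext (Nat.cast_injective this)

lemma gamma_inj {d k : ℕ} (hd : 2 ≤ d) {C C' : Fin k → E d}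
    (hC : C ∈ Conf d k) (hC' : C' ∈ Conf d k) (hA : OnAxis C) (hA' : OnAxis C')
    {t : ℝ} (ht : t ∈ Set.Icc (0:ℝ) 1) :
    (fun i => gammaSeg hd C C' i t) ∈ Conf d k := by
  rcases eq_or_lt_of_le ht.1 with h0 | h0
  · intro i i' h
    simp only [← h0, gamma_zero] at h
    exact hC h
  rcases eq_or_lt_of_le ht.2 with h1 | h1
  · intro i i' h
    simp only [h1, gamma_one] at h
    exact hC' h
  intro i i' h
  have hc := congrArg (fun v : E d => v (⟨1, by omega⟩ : Fin d)) h
  simp only at hc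
  rw [gamma_comp1 hd hA hA', gamma_comp1 hd hA hA'] at hc
  split_ifs at hc with ha hb
  · have h3 : (3:ℝ) * t ≠ 0 := by positivity
    apply fin_eq_of_cast
    exact mul_left_cancel₀ h3 hc
  · exact fin_eq_of_cast hc
  · have h3 : (3:ℝ) - 3 * t > 0 := by linarith
    apply fin_eq_of_cast
    exact mul_right_cancel₀ (ne_of_gt h3) hc

lemma gamma_cont {d k : ℕ} (hd : 2 ≤ d) :
    Continuous (fun q : ((Fin k → E d) × (Fin k → E d)) × ℝ =>
      fun i => gammaSeg hd q.1.1 q.1.2 i q.2) := by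
  refine continuous_pi fun i => ?_
  unfold gammaSeg
  have hB : Continuous (fun q : ((Fin k → E d) × (Fin k → E d)) × ℝ =>
      if q.2 ≤ 2/3 then q.1.1 i + ((i:ℝ)+1) • e2v d hd + (3*q.2 - 1) • (q.1.2 i - q.1.1 i)
      else q.1.2 i + (((i:ℝ)+1) * (3 - 3*q.2)) • e2v d hd) := by
    apply Continuous.if_le
    · fun_prop
    · fun_prop
    · fun_prop
    · fun_prop
    · intro q hq
      rw [hq]
      norm_num
      module
  apply Continuous.if_le
  · fun_prop
  · exact hB
  · fun_prop
  · fun_prop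
  · intro q hq
    rw [hq, if_pos (by norm_num)]
    norm_num


/-- For d, k ≥ 2 and C, C' ∈ F(ℝ,k) ⊂ F(ℝ^d,k), the path Γ^{C,C'}
is collision-free at every time t ∈ [0,1], runs from C to C', and the resulting
map Γ : F(ℝ,k) × F(ℝ,k) → P(F(ℝ^d,k)) is a continuous section of e_2. -/
theorem stmt4 (d k : ℕ) (hd : 2 ≤ d) (hk : 2 ≤ k) :
    (∀ C C' : Fin k → E d, C ∈ Conf d k → C' ∈ Conf d k → OnAxis C → OnAxis C' →
      (∀ t ∈ Set.Icc (0 : ℝ) 1, (fun i => gammaSeg hd C C' i t) ∈ Conf d k) ∧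
      (∀ i, gammaSeg hd C C' i 0 = C i) ∧ (∀ i, gammaSeg hd C C' i 1 = C' i)) ∧
    ∃ s : {p : (Fin k → E d) × (Fin k → E d) //
            p.1 ∈ Conf d k ∧ p.2 ∈ Conf d k ∧ OnAxis p.1 ∧ OnAxis p.2} →
          C(unitInterval, ↥(Conf d k)),
      Continuous s ∧
      (∀ p, ∀ t : unitInterval, ∀ i : Fin k,
        ((s p t : Fin k → E d) i) = gammaSeg hd p.1.1 p.1.2 i (t : ℝ)) ∧
      (∀ p, (s p 0 : Fin k → E d) = p.1.1 ∧ (s p 1 : Fin k → E d) = p.1.2) := by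
  constructor
  · intro C C' hC hC' hA hA'
    exact ⟨fun t ht => gamma_inj hd hC hC' hA hA' ht,
      fun i => gamma_zero hd C C' i, fun i => gamma_one hd C C' i⟩
  · refine ⟨fun p => ⟨fun t => ⟨fun i => gammaSeg hd p.1.1 p.1.2 i (t : ℝ),
      gamma_inj hd p.2.1 p.2.2.1 p.2.2.2.1 p.2.2.2.2 t.2⟩, ?_⟩, ?_, ?_, ?_⟩
    · exact Continuous.subtype_mk
        ((gamma_cont hd).comp (by fun_prop : Continuous fun t : unitInterval =>
          ((p.1.1, p.1.2), (t : ℝ)))) _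
    · apply ContinuousMap.continuous_of_continuous_uncurry
      refine Continuous.subtype_mk ((gamma_cont hd).comp
        (show Continuous fun x : {p : (Fin k → E d) × (Fin k → E d) //
            p.1 ∈ Conf d k ∧ p.2 ∈ Conf d k ∧ OnAxis p.1 ∧ OnAxis p.2} × unitInterval =>
          ((x.1.1 : (Fin k → E d) × (Fin k → E d)), ((x.2 : ℝ))) by fun_prop)) _
    · intro p t i; rfl
    · intro p
      constructor
      · funext i
        exact gamma_zero hd p.1.1 p.1.2 i
      · funext i
        exact gamma_one hd p.1.1 p.1.2 i
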